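/- arXiv:2511.22514 — 2 statements merged into one kernel-verified Lean document; each statement's English description precedes it below -/
import Mathlib

section
/- Define the grammic congruence on words over {1,...,n} by u ≡ v if and only if for all 1 ≤ p ≤ q ≤ n, the maximum length of a weakly increasing subsequence of u with entries in [p,q] equals that of v. Then ≡ is a two-sided congruence on the free monoid over {1,...,n}: it is an equivalence relation and u ≡ v, u' ≡ v' imply uu' ≡ vv'. -/
/-- The maximum length of a weakly increasing subsequence of `w` all of whose
letters lie in the interval `[p, q]`. -/
def wis (w : List ℕ) (p q : ℕ) : ℕ :=
  ((w.sublists.filter (fun s => decide (s.Pairwise (· ≤ ·) ∧ ∀ a ∈ s, p ≤ a ∧ a ≤ q))).map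
    List.length).foldr max 0

/-- The grammic congruence on words over the alphabet {1, ..., n}. -/
def grameq (n : ℕ) (u v : List ℕ) : Prop :=
  ∀ p q : ℕ, 1 ≤ p → p ≤ q → q ≤ n → wis u p q = wis v p q

private lemma foldr_max_le {a : ℕ} : ∀ {l : List ℕ}, a ∈ l → a ≤ l.foldr max 0
  | b :: t, h => by
    rcases List.mem_cons.1 h with rfl | h
    · exact le_max_left _ _
    · exact le_trans (foldr_max_le h) (le_max_right _ _)

private lemma foldr_max_mem : ∀ (l : List ℕ), l.foldr max 0 = 0 ∨ l.foldr max 0 ∈ l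
  | [] => Or.inl rfl
  | b :: t => by
    simp only [List.foldr]
    rcases foldr_max_mem t with h | h
    · rw [h]; simp
    · rcases max_cases b (t.foldr max 0) with ⟨h1, _⟩ | ⟨h1, _⟩ <;> rw [h1]
      · exact Or.inr (List.mem_cons_self)
      · exact Or.inr (List.mem_cons_of_mem _ h)

private lemma le_wis {s w : List ℕ} {p q : ℕ} (hs : s.Sublist w)
    (hsort : s.Pairwise (· ≤ ·)) (hbd : ∀ a ∈ s, p ≤ a ∧ a ≤ q) :
    s.length ≤ wis w p q := by
  apply foldr_max_le
  apply List.mem_map.2 ⟨s, ?_, rfl⟩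
  refine List.mem_filter.2 ⟨List.mem_sublists.2 hs, ?_⟩
  simp only [decide_eq_true_eq]
  exact ⟨hsort, hbd⟩

private lemma wis_exists (w : List ℕ) (p q : ℕ) :
    ∃ s : List ℕ, s.Sublist w ∧ s.Pairwise (· ≤ ·) ∧ (∀ a ∈ s, p ≤ a ∧ a ≤ q) ∧
      s.length = wis w p q := by
  have hmem := foldr_max_mem ((w.sublists.filter
      (fun s => decide (s.Pairwise (· ≤ ·) ∧ ∀ a ∈ s, p ≤ a ∧ a ≤ q))).map List.length)
  rcases hmem with h | h
  · exact ⟨[], List.nil_sublist _, List.Pairwise.nil, by simp, by simp only [wis, List.length_nil, h]⟩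
  · rcases List.mem_map.1 h with ⟨s, hs, hlen⟩
    rcases List.mem_filter.1 hs with ⟨hsub, hprop⟩
    simp only [decide_eq_true_eq] at hprop
    exact ⟨s, List.mem_sublists.1 hsub, hprop.1, hprop.2, hlen⟩

/-- Lower bound: tropical product inequality. -/
private lemma wis_append_ge {u v : List ℕ} {p r q : ℕ} (hpr : p ≤ r) (hrq : r ≤ q) :
    wis u p r + wis v r q ≤ wis (u ++ v) p q := by
  obtain ⟨s1, hs1, hsort1, hbd1, hlen1⟩ := wis_exists u p r
  obtain ⟨s2, hs2, hsort2, hbd2, hlen2⟩ := wis_exists v r q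
  rw [← hlen1, ← hlen2, ← List.length_append]
  apply le_wis (List.Sublist.append hs1 hs2)
  · exact List.pairwise_append.2
      ⟨hsort1, hsort2, fun a ha b hb => le_trans (hbd1 a ha).2 (hbd2 b hb).1⟩
  · intro a ha
    rcases List.mem_append.1 ha with ha | ha
    · exact ⟨(hbd1 a ha).1, le_trans (hbd1 a ha).2 hrq⟩
    · exact ⟨le_trans hpr (hbd2 a ha).1, (hbd2 a ha).2⟩

/-- Upper bound: there is a witnessing split point. -/
private lemma wis_append_le {u v : List ℕ} {p q : ℕ} (hpq : p ≤ q) :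
    ∃ r, p ≤ r ∧ r ≤ q ∧ wis (u ++ v) p q ≤ wis u p r + wis v r q := by
  obtain ⟨s, hs, hsort, hbd, hlen⟩ := wis_exists (u ++ v) p q
  rcases List.sublist_append_iff.1 hs with ⟨s1, s2, rfl, h1, h2⟩
  obtain ⟨hsort1, hsort2, hcross⟩ := List.pairwise_append.1 hsort
  cases s2 with
  | nil =>
    refine ⟨q, hpq, le_rfl, ?_⟩
    rw [← hlen]
    simp only [List.append_nil, List.length_append, List.length_nil, Nat.add_zero] at *
    exact le_trans (le_wis h1 hsort1 hbd) (Nat.le_add_right _ _)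
  | cons b t =>
    have hbmem : b ∈ s1 ++ b :: t := List.mem_append.2 (Or.inr (List.mem_cons_self))
    refine ⟨b, (hbd b hbmem).1, (hbd b hbmem).2, ?_⟩
    rw [← hlen, List.length_append]
    apply Nat.add_le_add
    · apply le_wis h1 hsort1
      intro a ha
      exact ⟨(hbd a (List.mem_append.2 (Or.inl ha))).1,
        hcross a ha b (List.mem_cons_self)⟩
    · apply le_wis h2 hsort2
      intro a ha
      refine ⟨?_, (hbd a (List.mem_append.2 (Or.inr ha))).2⟩
      rcases List.mem_cons.1 ha with rfl | ha
      · exact le_rfl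
      · exact List.rel_of_pairwise_cons hsort2 ha

theorem stmt3 (n : ℕ) :
    Equivalence (grameq n) ∧
      ∀ u v u' v' : List ℕ,
        (∀ a ∈ u, 1 ≤ a ∧ a ≤ n) → (∀ a ∈ v, 1 ≤ a ∧ a ≤ n) →
        (∀ a ∈ u', 1 ≤ a ∧ a ≤ n) → (∀ a ∈ v', 1 ≤ a ∧ a ≤ n) →
        grameq n u v → grameq n u' v' → grameq n (u ++ u') (v ++ v') := by
  constructor
  · exact ⟨fun u p q _ _ _ => rfl,
      fun h p q h1 h2 h3 => (h p q h1 h2 h3).symm,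
      fun h h' p q h1 h2 h3 => (h p q h1 h2 h3).trans (h' p q h1 h2 h3)⟩
  · intro u v u' v' _ _ _ _ huv hu'v' p q hp hpq hq
    apply le_antisymm
    · obtain ⟨r, hpr, hrq, hle⟩ := wis_append_le (u := u) (v := u') hpq
      calc wis (u ++ u') p q ≤ wis u p r + wis u' r q := hle
        _ = wis v p r + wis v' r q := by
            rw [huv p r hp hpr (hrq.trans hq), hu'v' r q (hp.trans hpr) hrq hq]
        _ ≤ wis (v ++ v') p q := wis_append_ge hpr hrq
    · obtain ⟨r, hpr, hrq, hle⟩ := wis_append_le (u := v) (v := v') hpq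
      calc wis (v ++ v') p q ≤ wis v p r + wis v' r q := hle
        _ = wis u p r + wis u' r q := by
            rw [huv p r hp hpr (hrq.trans hq), hu'v' r q (hp.trans hpr) hrq hq]
        _ ≤ wis (u ++ u') p q := wis_append_ge hpr hrq
end

section
/- Let w be a standard word of length k (a permutation of {1,...,k} written as a word). Define the charge sequence chseq(w) of length k by chseq(w)_1 = 0 and, for i ≥ 2, chseq(w)_i = chseq(w)_{i-1} if i occurs to the left of i-1 in w, and chseq(w)_i = chseq(w)_{i-1} + 1 if i occurs to the right of i-1 in w. If u and v are standard words of length k with u_{p,q} = v_{p,q} for all 1 ≤ p ≤ q ≤ k (where x_{p,q} is the maximum length of a weakly increasing subsequence of x with entries in [p,q]), then chseq(u) = chseq(v). -/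
/-- The charge sequence of a standard word: \`chseq w i\` is the i-th entry (for 1 ≤ i). -/
def chseq (w : List ℕ) : ℕ → ℕ
  | 0 => 0
  | 1 => 0
  | (i + 2) => chseq w (i + 1) + (if w.idxOf (i + 1) < w.idxOf (i + 2) then 1 else 0)

lemma le_foldr_max {x : ℕ} {l : List ℕ} (h : x ∈ l) : x ≤ l.foldr max 0 := by
  induction l with
  | nil => simp at h
  | cons a t ih =>
    rcases List.mem_cons.mp h with rfl | h
    · exact le_max_left _ _
    · exact le_trans (ih h) (le_max_right _ _)

lemma foldr_max_le_s12 {n : ℕ} {l : List ℕ} (h : ∀ x ∈ l, x ≤ n) : l.foldr max 0 ≤ n := by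
  induction l with
  | nil => simp
  | cons a t ih =>
    exact max_le (h a (List.mem_cons_self)) (ih fun x hx => h x (List.mem_cons_of_mem _ hx))

lemma pair_sublist_of_lt {a b : ℕ} :
    ∀ {w : List ℕ}, b ∈ w → w.idxOf a < w.idxOf b → List.Sublist [a, b] w
  | [], hb, _ => absurd hb (List.not_mem_nil)
  | c :: t, hb, hlt => by
    by_cases hac : a = c
    · subst hac
      have hbt : b ∈ t := by
        rcases List.mem_cons.mp hb with rfl | h
        · simp at hlt
        · exact h
      exact List.cons_sublist_cons.mpr (List.singleton_sublist.mpr hbt)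
    · have hbc : b ≠ c := by
        rintro rfl
        simp [List.idxOf_cons_self] at hlt
      have hbt : b ∈ t := by
        rcases List.mem_cons.mp hb with rfl | h
        · exact absurd rfl hbc
        · exact h
      have hlt' : t.idxOf a < t.idxOf b := by
        rw [List.idxOf_cons_ne _ (Ne.symm hac), List.idxOf_cons_ne _ (Ne.symm hbc)] at hlt
        omega
      exact (pair_sublist_of_lt hbt hlt').cons c

lemma lt_of_pair_sublist {a b : ℕ} :
    ∀ {w : List ℕ}, w.Nodup → List.Sublist [a, b] w → w.idxOf a < w.idxOf b
  | [], _, hs => by simp at hs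
  | c :: t, hnd, hs => by
    have hct : c ∉ t := (List.nodup_cons.mp hnd).1
    have hndt : t.Nodup := (List.nodup_cons.mp hnd).2
    cases hs with
    | cons _ hs =>
      have hat : a ∈ t := hs.subset (List.mem_cons_self)
      have hbt : b ∈ t := hs.subset (List.mem_cons_of_mem _ (List.mem_cons_self))
      have hac : a ≠ c := fun h => hct (h ▸ hat)
      have hbc : b ≠ c := fun h => hct (h ▸ hbt)
      rw [List.idxOf_cons_ne _ (Ne.symm hac), List.idxOf_cons_ne _ (Ne.symm hbc)]
      have := lt_of_pair_sublist hndt hs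
      omega
    | cons_cons _ hs =>
      have hbt : b ∈ t := List.singleton_sublist.mp hs
      have hbc : b ≠ a := fun h => hct (h ▸ hbt)
      rw [List.idxOf_cons_self, List.idxOf_cons_ne _ (Ne.symm hbc)]
      omega

lemma wis_adj {w : List ℕ} (hw : w.Nodup) {p : ℕ} (hp : p ∈ w) (hq : p + 1 ∈ w) :
    wis w p (p + 1) = if w.idxOf p < w.idxOf (p + 1) then 2 else 1 := by
  have hmem : ∀ s : List ℕ,
      s ∈ w.sublists.filter
        (fun s => decide (s.Pairwise (· ≤ ·) ∧ ∀ a ∈ s, p ≤ a ∧ a ≤ p + 1)) ↔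
      List.Sublist s w ∧ s.Pairwise (· ≤ ·) ∧ ∀ a ∈ s, p ≤ a ∧ a ≤ p + 1 := by
    intro s
    simp [List.mem_filter, List.mem_sublists, and_assoc]
  unfold wis
  split_ifs with hlt
  · apply le_antisymm
    · apply foldr_max_le_s12
      intro x hx
      obtain ⟨s, hs, rfl⟩ := List.mem_map.mp hx
      obtain ⟨hsub, _, hrange⟩ := (hmem s).mp hs
      have hnd : s.Nodup := hsub.nodup hw
      have hsubset : s.toFinset ⊆ ({p, p + 1} : Finset ℕ) := by
        intro a ha
        have := hrange a (List.mem_toFinset.mp ha)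
        simp only [Finset.mem_insert, Finset.mem_singleton]
        omega
      calc s.length = s.toFinset.card := (List.toFinset_card_of_nodup hnd).symm
        _ ≤ ({p, p + 1} : Finset ℕ).card := Finset.card_le_card hsubset
        _ ≤ 2 := (Finset.card_insert_le _ _).trans (by simp)
    · have hin : [p, p + 1] ∈ w.sublists.filter
          (fun s => decide (s.Pairwise (· ≤ ·) ∧ ∀ a ∈ s, p ≤ a ∧ a ≤ p + 1)) := by
        refine (hmem _).mpr ⟨pair_sublist_of_lt hq hlt, ?_, ?_⟩
        · simp [List.pairwise_cons]
        · intro a ha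
          rcases List.mem_cons.mp ha with rfl | ha
          · omega
          · rcases List.mem_singleton.mp ha with rfl
            omega
      have : ([p, p + 1].length : ℕ) ∈
          (w.sublists.filter
            (fun s => decide (s.Pairwise (· ≤ ·) ∧ ∀ a ∈ s, p ≤ a ∧ a ≤ p + 1))).map
            List.length := List.mem_map_of_mem hin
      simpa using le_foldr_max this
  · apply le_antisymm
    · apply foldr_max_le_s12
      intro x hx
      obtain ⟨s, hs, rfl⟩ := List.mem_map.mp hx
      obtain ⟨hsub, hsort, hrange⟩ := (hmem s).mp hs
      rcases s with _ | ⟨a, _ | ⟨b, r⟩⟩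
      · simp
      · simp
      · exfalso
        have hnd : (a :: b :: r).Nodup := hsub.nodup hw
        have hab2 : List.Sublist [a, b] (a :: b :: r) := ((List.nil_sublist r).cons_cons b).cons_cons a
        have habw : List.Sublist [a, b] w := hab2.trans hsub
        have ha' := hrange a (List.mem_cons_self)
        have hb' := hrange b (List.mem_cons_of_mem _ (List.mem_cons_self))
        have hle : a ≤ b := (List.pairwise_cons.mp hsort).1 b
          (List.mem_cons_self)
        have hne : a ≠ b := by
          have := (List.nodup_cons.mp hnd).1
          intro hEq; exact this (hEq ▸ List.mem_cons_self)
        have hap : a = p := by omega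
        have hbq : b = p + 1 := by omega
        subst hap; subst hbq
        exact hlt (lt_of_pair_sublist hw habw)
    · have hin : [p] ∈ w.sublists.filter
          (fun s => decide (s.Pairwise (· ≤ ·) ∧ ∀ a ∈ s, p ≤ a ∧ a ≤ p + 1)) := by
        refine (hmem _).mpr ⟨List.singleton_sublist.mpr hp, by simp, ?_⟩
        intro a ha
        rcases List.mem_singleton.mp ha with rfl
        omega
      have : ([p].length : ℕ) ∈
          (w.sublists.filter
            (fun s => decide (s.Pairwise (· ≤ ·) ∧ ∀ a ∈ s, p ≤ a ∧ a ≤ p + 1))).map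
            List.length := List.mem_map_of_mem hin
      simpa using le_foldr_max this

theorem stmt12 (k : ℕ) (u v : List ℕ)
    (hu : u.Perm (List.range' 1 k)) (hv : v.Perm (List.range' 1 k))
    (h : ∀ p q : ℕ, 1 ≤ p → p ≤ q → q ≤ k → wis u p q = wis v p q) :
    ∀ i : ℕ, 1 ≤ i → i ≤ k → chseq u i = chseq v i := by
  have hund : u.Nodup := hu.nodup_iff.mpr (List.nodup_range')
  have hvnd : v.Nodup := hv.nodup_iff.mpr (List.nodup_range')
  have humem : ∀ x, 1 ≤ x → x ≤ k → x ∈ u := by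
    intro x h1 h2
    rw [hu.mem_iff, List.mem_range'_1]
    omega
  have hvmem : ∀ x, 1 ≤ x → x ≤ k → x ∈ v := by
    intro x h1 h2
    rw [hv.mem_iff, List.mem_range'_1]
    omega
  intro i
  induction i with
  | zero => omega
  | succ n ih =>
    match n, ih with
    | 0, _ => intro _ _; rfl
    | (m + 1), ih =>
      intro _ h2
      have hIH : chseq u (m + 1) = chseq v (m + 1) := ih (by omega) (by omega)
      have hwu := wis_adj hund (humem (m + 1) (by omega) (by omega))
        (humem (m + 2) (by omega) (by omega))
      have hwv := wis_adj hvnd (hvmem (m + 1) (by omega) (by omega))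
        (hvmem (m + 2) (by omega) (by omega))
      have hw := h (m + 1) (m + 2) (by omega) (by omega) (by omega)
      rw [hwu, hwv] at hw
      show chseq u (m + 2) = chseq v (m + 2)
      simp only [chseq, hIH]
      congr 1
      split_ifs at hw ⊢ with h1 h2 <;> omega
end
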